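/- Let n be a positive natural number, ν > 0, ρ_B > 0, ρ_E > 0. Let X and Y be independent random variables where X has the Gamma distribution with shape n and scale ρ_B (density x ↦ x^{n−1} ρ_B^{−n} e^{−x/ρ_B}/Γ(n) on (0,∞)) and Y has the Gamma distribution with shape ν and scale ρ_E (density y ↦ y^{ν−1} ρ_E^{−ν} e^{−y/ρ_E}/Γ(ν) on (0,∞)). Then for every z ≥ 1, P((1+X)/(1+Y) ≤ z) = 1 − exp(−(z−1)/ρ_B) · ∑_{a=0}^{n−1} (1/(a! · ρ_B^a · Γ(ν))) · ∑_{k=0}^{a} C(a,k) · z^k · (z−1)^{a−k} · Γ(k+ν) · ρ_B^{k+ν} · ρ_E^{k} · (ρ_B + z·ρ_E)^{−(k+ν)}, where C(a,k) is the binomial coefficient. -/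

import Mathlib

open MeasureTheory

/-- The Gamma(shape `k`, scale `ρ`) density on `(0,∞)`. -/
noncomputable def gammaScaleDensity (k ρ x : ℝ) : ℝ :=
  if 0 < x then x ^ (k - 1) * ρ ^ (-k) * Real.exp (-x / ρ) / Real.Gamma k else 0

open Real Set

noncomputable def gammaCdfPoly (n : ℕ) (ρ t : ℝ) : ℝ :=
  ∑ a ∈ Finset.range n, t ^ a / (a.factorial * ρ ^ a)

lemma hasDerivAt_gammaCdfPoly (n : ℕ) (ρ : ℝ) (t : ℝ) :
    HasDerivAt (fun t => gammaCdfPoly n ρ t)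
      (∑ a ∈ Finset.range n, (a : ℝ) * t ^ (a - 1) / (a.factorial * ρ ^ a)) t := by
  unfold gammaCdfPoly
  exact HasDerivAt.fun_sum fun a _ => (hasDerivAt_pow a t).div_const _

lemma key_telescope (n : ℕ) (hn : 0 < n) {ρ : ℝ} (hρ : ρ ≠ 0) (t : ℝ) :
    (∑ a ∈ Finset.range n, (a : ℝ) * t ^ (a - 1) / (a.factorial * ρ ^ a))
      - gammaCdfPoly n ρ t / ρ = -(t ^ (n-1) / ((n-1).factorial * ρ ^ n)) := by
  obtain ⟨m, rfl⟩ := Nat.exists_eq_add_of_lt hn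
  simp only [zero_add]
  unfold gammaCdfPoly
  rw [Finset.sum_range_succ' (fun a => (a:ℝ) * t ^ (a-1) / (a.factorial * ρ ^ a)),
    Finset.sum_div, Finset.sum_range_succ (fun a => t ^ a / (a.factorial * ρ ^ a) / ρ)]
  have h1 : ∀ a : ℕ, ((a+1 : ℕ):ℝ) * t ^ (a+1-1) / ((a+1).factorial * ρ ^ (a+1))
      = t ^ a / (a.factorial * ρ ^ a) / ρ := by
    intro a
    rw [Nat.factorial_succ, Nat.add_sub_cancel]
    have ha : ((a:ℝ)+1) ≠ 0 := by positivity
    have hf : ((a.factorial : ℝ)) ≠ 0 := by positivity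
    push_cast
    rw [pow_succ]
    field_simp
  rw [Finset.sum_congr rfl fun a _ => h1 a, Nat.add_sub_cancel, pow_succ]
  simp only [Nat.cast_zero, zero_mul, zero_div, add_zero]
  have key : ∀ S c d : ℝ, c = d → S - (S + c) = -d := by rintro S c d rfl; ring
  exact key _ _ _ (by rw [div_div, mul_assoc])

lemma gammaCdfPoly_zero (n : ℕ) (hn : 0 < n) (ρ : ℝ) : gammaCdfPoly n ρ 0 = 1 := by
  unfold gammaCdfPoly
  rw [Finset.sum_eq_single_of_mem 0 (Finset.mem_range.2 hn)]
  · simp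
  · intro a _ ha
    simp [zero_pow ha]

lemma hasDerivAt_Fc (n : ℕ) (hn : 0 < n) {ρ : ℝ} (hρ : 0 < ρ) (t : ℝ) :
    HasDerivAt (fun t => 1 - Real.exp (-t/ρ) * gammaCdfPoly n ρ t)
      (t ^ (n-1) * Real.exp (-t/ρ) / ((n-1).factorial * ρ ^ n)) t := by
  have h1 : HasDerivAt (fun t : ℝ => -t/ρ) (-(1/ρ)) t := by
    simpa [neg_div] using ((hasDerivAt_id t).neg.div_const ρ)
  have h2 : HasDerivAt (fun t : ℝ => Real.exp (-t/ρ)) (Real.exp (-t/ρ) * (-(1/ρ))) t :=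
    by have := (Real.hasDerivAt_exp (-t/ρ)).comp t h1; exact this
  have h3 := h2.fun_mul (hasDerivAt_gammaCdfPoly n ρ t)
  have h4 := (hasDerivAt_const t (1:ℝ)).fun_sub h3
  refine h4.congr_deriv ?_
  have key := key_telescope n hn hρ.ne' t
  have key' : (∑ a ∈ Finset.range n, (a:ℝ) * t ^ (a - 1) / (a.factorial * ρ ^ a))
      = gammaCdfPoly n ρ t / ρ - t ^ (n-1) / ((n-1).factorial * ρ ^ n) := by linarith
  rw [key']
  have hρ' : ρ ≠ 0 := hρ.ne'
  have hC : ((n-1).factorial : ℝ) * ρ ^ n ≠ 0 := by positivity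
  field_simp
  ring

lemma integral_Ioc_gamma (n : ℕ) (hn : 0 < n) {ρ : ℝ} (hρ : 0 < ρ) {t : ℝ} (ht : 0 ≤ t) :
    ∫ x in Ioc 0 t, x ^ (n-1) * Real.exp (-x/ρ) =
      ((n-1).factorial * ρ ^ n) * (1 - Real.exp (-t/ρ) * gammaCdfPoly n ρ t) := by
  have hcont : Continuous (fun x : ℝ => x ^ (n-1) * Real.exp (-x/ρ)) := by
    exact (continuous_pow (n-1)).mul (Real.continuous_exp.comp ((continuous_id.neg).div_const ρ))
  have hC : (0:ℝ) < ((n-1).factorial : ℝ) * ρ ^ n := by positivity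
  have hderiv : ∀ x ∈ uIcc 0 t, HasDerivAt
      (fun u => ((n-1).factorial : ℝ) * ρ ^ n * (1 - Real.exp (-u/ρ) * gammaCdfPoly n ρ u))
      (x ^ (n-1) * Real.exp (-x/ρ)) x := by
    intro x _
    have := (hasDerivAt_Fc n hn hρ x).const_mul (((n-1).factorial : ℝ) * ρ ^ n)
    refine this.congr_deriv ?_
    field_simp
  have hFTC := intervalIntegral.integral_eq_sub_of_hasDerivAt hderiv
    (hcont.intervalIntegrable 0 t)
  rw [intervalIntegral.integral_of_le ht] at hFTC
  rw [hFTC, gammaCdfPoly_zero n hn]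
  simp

lemma Fc_nonneg (n : ℕ) (hn : 0 < n) {ρ : ℝ} (hρ : 0 < ρ) {t : ℝ} (ht : 0 ≤ t) :
    0 ≤ 1 - Real.exp (-t/ρ) * gammaCdfPoly n ρ t := by
  have hC : (0:ℝ) < ((n-1).factorial : ℝ) * ρ ^ n := by positivity
  have h := integral_Ioc_gamma n hn hρ ht
  have hint : 0 ≤ ∫ x in Ioc 0 t, x ^ (n-1) * Real.exp (-x/ρ) := by
    apply setIntegral_nonneg measurableSet_Ioc
    intro x hx
    have := hx.1.le
    positivity
  nlinarith

lemma gammaCdfPoly_nonneg (n : ℕ) {ρ t : ℝ} (hρ : 0 < ρ) (ht : 0 ≤ t) :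
    0 ≤ gammaCdfPoly n ρ t := by
  apply Finset.sum_nonneg
  intro a _
  positivity

lemma Fc_le_one (n : ℕ) {ρ t : ℝ} (hρ : 0 < ρ) (ht : 0 ≤ t) :
    1 - Real.exp (-t/ρ) * gammaCdfPoly n ρ t ≤ 1 := by
  have := gammaCdfPoly_nonneg n hρ ht
  nlinarith [Real.exp_pos (-t/ρ)]

lemma cdf_gamma_map (n : ℕ) (hn : 0 < n) {ρ : ℝ} (hρ : 0 < ρ) {t : ℝ} (ht : 0 ≤ t) :
    (volume.withDensity (fun x => ENNReal.ofReal (gammaScaleDensity n ρ x))) (Iic t)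
      = ENNReal.ofReal (1 - Real.exp (-t/ρ) * gammaCdfPoly n ρ t) := by
  have hC : (0:ℝ) < ((n-1).factorial : ℝ) * ρ ^ n := by positivity
  have hdens : ∀ x ∈ Ioc (0:ℝ) t, gammaScaleDensity n ρ x
      = x ^ (n-1) * Real.exp (-x/ρ) / (((n-1).factorial : ℝ) * ρ ^ n) := by
    intro x hx
    have hx0 : 0 < x := hx.1
    unfold gammaScaleDensity
    rw [if_pos hx0]
    have h1 : (n:ℝ) - 1 = ((n-1 : ℕ) : ℝ) := by
      rw [Nat.cast_sub hn]; simp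
    have h2 : x ^ ((n:ℝ) - 1) = x ^ (n-1 : ℕ) := by
      rw [h1, Real.rpow_natCast]
    have h3 : ρ ^ (-(n:ℝ)) = (ρ ^ (n:ℕ))⁻¹ := by
      rw [Real.rpow_neg hρ.le, Real.rpow_natCast]
    have h4 : Real.Gamma (n:ℝ) = ((n-1).factorial : ℝ) := by
      rw [show (n:ℝ) = ((n-1:ℕ):ℝ) + 1 by rw [Nat.cast_sub hn]; ring,
        Real.Gamma_nat_eq_factorial]
    rw [h2, h3, h4]
    field_simp
  rw [withDensity_apply _ measurableSet_Iic, ← Iic_union_Ioc_eq_Iic ht,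
    lintegral_union measurableSet_Ioc (Iic_disjoint_Ioc le_rfl)]
  have hzero : ∫⁻ x in Iic (0:ℝ), ENNReal.ofReal (gammaScaleDensity n ρ x) = 0 := by
    rw [setLIntegral_congr_fun (g := fun _ => 0) measurableSet_Iic
      (fun x (hx : x ≤ 0) => by
        unfold gammaScaleDensity; rw [if_neg (not_lt.2 hx), ENNReal.ofReal_zero]),
      lintegral_zero]
  rw [hzero, zero_add,
    setLIntegral_congr_fun measurableSet_Ioc (fun x hx => by rw [hdens x hx])]
  have hcont : Continuous (fun x : ℝ => x ^ (n-1) * Real.exp (-x/ρ) / (((n-1).factorial : ℝ) * ρ ^ n)) :=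
    (((continuous_pow (n-1)).mul (Real.continuous_exp.comp ((continuous_id.neg).div_const ρ))).div_const _)
  rw [← ofReal_integral_eq_lintegral_ofReal (hcont.integrableOn_Ioc)
    ((ae_restrict_iff' measurableSet_Ioc).2 (ae_of_all _ (fun x hx =>
      div_nonneg (mul_nonneg (pow_nonneg hx.1.le _) (Real.exp_pos _).le) hC.le)))]
  congr 1
  rw [integral_div, integral_Ioc_gamma n hn hρ ht]
  field_simp

lemma integrableOn_rpow_exp {c l : ℝ} (hc : 0 < c) (hl : 0 < l) :
    IntegrableOn (fun y : ℝ => y ^ (c-1) * Real.exp (-(l * y))) (Ioi 0) := by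
  have h := integrableOn_rpow_mul_exp_neg_mul_rpow
    (by linarith : (-1:ℝ) < c - 1) one_pos hl
  refine h.congr_fun (fun x hx => ?_) measurableSet_Ioi
  dsimp only
  rw [Real.rpow_one, neg_mul]

lemma integral_rpow_exp {c l : ℝ} (hc : 0 < c) (hl : 0 < l) :
    ∫ y in Ioi (0:ℝ), y ^ (c-1) * Real.exp (-(l * y)) = (1/l) ^ c * Real.Gamma c :=
  Real.integral_rpow_mul_exp_neg_mul_Ioi hc hl

lemma main_integral (n : ℕ) (hn : 0 < n) {ν ρB ρE : ℝ} (hν : 0 < ν) (hρB : 0 < ρB)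
    (hρE : 0 < ρE) {z : ℝ} (hz : 1 ≤ z) :
    IntegrableOn (fun y : ℝ =>
      (y ^ (ν-1) * ρE ^ (-ν) * Real.exp (-y/ρE) / Real.Gamma ν) *
        (1 - Real.exp (-(z-1+z*y)/ρB) * gammaCdfPoly n ρB (z-1+z*y))) (Ioi 0) ∧
    ∫ y in Ioi (0:ℝ),
      (y ^ (ν-1) * ρE ^ (-ν) * Real.exp (-y/ρE) / Real.Gamma ν) *
        (1 - Real.exp (-(z-1+z*y)/ρB) * gammaCdfPoly n ρB (z-1+z*y))
    = 1 - Real.exp (-(z - 1) / ρB) * ∑ a ∈ Finset.range n,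
        (1 / ((a.factorial : ℝ) * ρB ^ a * Real.Gamma ν)) *
          ∑ k ∈ Finset.range (a + 1),
            (a.choose k : ℝ) * z ^ k * (z - 1) ^ (a - k) * Real.Gamma ((k : ℝ) + ν) *
              ρB ^ ((k : ℝ) + ν) * ρE ^ k * (ρB + z * ρE) ^ (-((k : ℝ) + ν)) := by
  have hz0 : (0:ℝ) < z := lt_of_lt_of_le one_pos hz
  have hΓν : (0:ℝ) < Real.Gamma ν := Real.Gamma_pos_of_pos hν
  set fE : ℝ → ℝ := fun y => y ^ (ν-1) * ρE ^ (-ν) * Real.exp (-y/ρE) / Real.Gamma ν with hfE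
  set l : ℝ := ρE⁻¹ + z/ρB with hl
  have hl0 : 0 < l := by positivity
  have hden : (0:ℝ) < ρB + z*ρE := by positivity
  -- fE rewrite
  have hfE_eq : fE = fun y => (ρE ^ (-ν) / Real.Gamma ν) * (y ^ (ν-1) * Real.exp (-(ρE⁻¹ * y))) := by
    funext y
    show y ^ (ν-1) * ρE ^ (-ν) * Real.exp (-y/ρE) / Real.Gamma ν = _
    rw [show -y/ρE = -(ρE⁻¹ * y) by ring]
    ring
  have hfE_int : IntegrableOn fE (Ioi 0) := by
    rw [hfE_eq]
    exact (integrableOn_rpow_exp hν (inv_pos.2 hρE)).const_mul _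
  have hIfE : ∫ y in Ioi (0:ℝ), fE y = 1 := by
    rw [hfE_eq]
    simp only
    rw [integral_const_mul, integral_rpow_exp hν (inv_pos.2 hρE), one_div, inv_inv]
    have h : ρE ^ (-ν) * ρE ^ ν = 1 := by
      rw [← Real.rpow_add hρE, neg_add_cancel, Real.rpow_zero]
    field_simp
    linear_combination h
  -- coefficients
  set coef : ℕ → ℕ → ℝ := fun a k =>
    Real.exp (-(z-1)/ρB) * ((a.choose k : ℝ) * z ^ k * (z-1) ^ (a-k) / (a.factorial * ρB ^ a))
      * (ρE ^ (-ν) / Real.Gamma ν) with hcoef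
  set G : ℝ → ℝ := fun y => fE y * (Real.exp (-(z-1+z*y)/ρB) * gammaCdfPoly n ρB (z-1+z*y))
    with hG
  set Sfun : ℝ → ℝ := fun y => ∑ a ∈ Finset.range n, ∑ k ∈ Finset.range (a+1),
      coef a k * (y ^ ((k:ℝ)+ν-1) * Real.exp (-(l*y))) with hSfun
  have hEq : EqOn G Sfun (Ioi 0) := by
    intro y hy
    have hy0 : (0:ℝ) < y := hy
    rw [hG, hSfun]
    simp only
    unfold gammaCdfPoly
    simp only [Finset.mul_sum]
    refine Finset.sum_congr rfl (fun a _ => ?_)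
    rw [show z-1+z*y = z*y+(z-1) by ring, add_pow, Finset.sum_div]
    simp only [Finset.mul_sum]
    refine Finset.sum_congr rfl (fun k hk => ?_)
    have hr1 : y ^ ((k:ℝ)+ν-1) = y ^ (ν - 1) * (y:ℝ) ^ (k:ℕ) := by
      rw [show (k:ℝ)+ν-1 = (ν-1)+(k:ℝ) by ring, Real.rpow_add hy0, Real.rpow_natCast]
    have hr2 : Real.exp (-(z*y+(z-1))/ρB) = Real.exp (-(z-1)/ρB) * Real.exp (-(z*y)/ρB) := by
      rw [← Real.exp_add]; congr 1; ring
    have hr3 : Real.exp (-(l*y)) = Real.exp (-y/ρE) * Real.exp (-(z*y)/ρB) := by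
      rw [← Real.exp_add]; congr 1; rw [hl]; ring
    rw [hr1, hr2, hr3, hcoef, hfE, mul_pow]
    ring
  have hterm_int : ∀ a k : ℕ, IntegrableOn
      (fun y : ℝ => coef a k * (y ^ ((k:ℝ)+ν-1) * Real.exp (-(l*y)))) (Ioi 0) := by
    intro a k
    have hkν : (0:ℝ) < (k:ℝ) + ν := by positivity
    exact (integrableOn_rpow_exp hkν hl0).const_mul _
  have hSfun_int : IntegrableOn Sfun (Ioi 0) := by
    rw [hSfun]
    apply integrable_finset_sum
    intro a _
    exact integrable_finset_sum _ (fun k _ => hterm_int a k)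
  have hG_int : IntegrableOn G (Ioi 0) :=
    hSfun_int.congr_fun (fun x hx => (hEq hx).symm) measurableSet_Ioi
  have hIG : ∫ y in Ioi (0:ℝ), G y = Real.exp (-(z - 1) / ρB) * ∑ a ∈ Finset.range n,
      (1 / ((a.factorial : ℝ) * ρB ^ a * Real.Gamma ν)) *
        ∑ k ∈ Finset.range (a + 1),
          (a.choose k : ℝ) * z ^ k * (z - 1) ^ (a - k) * Real.Gamma ((k : ℝ) + ν) *
            ρB ^ ((k : ℝ) + ν) * ρE ^ k * (ρB + z * ρE) ^ (-((k : ℝ) + ν)) := by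
    rw [setIntegral_congr_fun measurableSet_Ioi hEq, hSfun]
    rw [integral_finset_sum _ (fun a _ => integrable_finset_sum _ (fun k _ => hterm_int a k))]
    rw [Finset.mul_sum]
    refine Finset.sum_congr rfl (fun a _ => ?_)
    rw [integral_finset_sum _ (fun k _ => hterm_int a k), Finset.mul_sum, Finset.mul_sum]
    refine Finset.sum_congr rfl (fun k _ => ?_)
    have hkν : (0:ℝ) < (k:ℝ) + ν := by positivity
    rw [integral_const_mul, integral_rpow_exp hkν hl0]
    -- rpow algebra
    have h1l : (1/l) = ρB*ρE/(ρB+z*ρE) := by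
      rw [hl]; field_simp
    have h2 : (1/l) ^ ((k:ℝ)+ν) = ρB ^ ((k:ℝ)+ν) * ρE ^ ((k:ℝ)+ν) *
        (ρB+z*ρE) ^ (-((k:ℝ)+ν)) := by
      rw [h1l, Real.div_rpow (by positivity) hden.le, Real.rpow_neg hden.le,
        Real.mul_rpow hρB.le hρE.le, div_eq_mul_inv]
    have h3 : ρE ^ (-ν) * ρE ^ ((k:ℝ)+ν) = (ρE:ℝ) ^ (k:ℕ) := by
      rw [← Real.rpow_add hρE, ← Real.rpow_natCast ρE k]
      congr 1; ring
    rw [hcoef, h2]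
    linear_combination (Real.exp (-(z - 1) / ρB) * (a.choose k : ℝ) * z ^ k * (z-1) ^ (a-k)
      / ((a.factorial : ℝ) * ρB ^ a) / Real.Gamma ν
      * Real.Gamma ((k:ℝ) + ν) * ρB ^ ((k:ℝ)+ν) * (ρB+z*ρE) ^ (-((k:ℝ)+ν))) * h3
  constructor
  · have : (fun y : ℝ => fE y *
        (1 - Real.exp (-(z-1+z*y)/ρB) * gammaCdfPoly n ρB (z-1+z*y)))
        = fun y => fE y - G y := by
      funext y; rw [hG]; ring
    rw [this]
    exact hfE_int.sub hG_int
  · have : (fun y : ℝ => fE y *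
        (1 - Real.exp (-(z-1+z*y)/ρB) * gammaCdfPoly n ρB (z-1+z*y)))
        = fun y => fE y - G y := by
      funext y; rw [hG]; ring
    rw [show ∫ y in Ioi (0:ℝ), fE y * (1 - Real.exp (-(z-1+z*y)/ρB) * gammaCdfPoly n ρB (z-1+z*y))
        = ∫ y in Ioi (0:ℝ), (fE y - G y) from by rw [this]]
    rw [integral_sub hfE_int hG_int, hIfE, hIG]


lemma measure_gsd_Iic_zero (k ρ : ℝ) :
    (volume.withDensity (fun x => ENNReal.ofReal (gammaScaleDensity k ρ x))) (Iic 0) = 0 := by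
  rw [withDensity_apply _ measurableSet_Iic,
    setLIntegral_congr_fun (g := fun _ => 0) measurableSet_Iic
      (fun x (hx : x ≤ 0) => by
        unfold gammaScaleDensity; rw [if_neg (not_lt.2 hx), ENNReal.ofReal_zero]),
    lintegral_zero]

lemma measurable_gsd (k ρ : ℝ) :
    Measurable fun x => ENNReal.ofReal (gammaScaleDensity k ρ x) := by
  apply Measurable.ennreal_ofReal
  unfold gammaScaleDensity
  apply Measurable.ite (measurableSet_lt measurable_const measurable_id) ?_ measurable_const
  fun_prop


/-- Single-term instance of Proposition 2: closed-form CDF of `Φ = (1+X)/(1+Y)` for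
independent Gamma-distributed `X` (integer shape `n`, scale `ρB`) and `Y`
(shape `ν`, scale `ρE`). -/
theorem stmt15 {Ω : Type*} [MeasurableSpace Ω] (P : Measure Ω) [IsProbabilityMeasure P]
    (n : ℕ) (hn : 0 < n) (ν ρB ρE : ℝ) (hν : 0 < ν) (hρB : 0 < ρB) (hρE : 0 < ρE)
    (X Y : Ω → ℝ) (hX : Measurable X) (hY : Measurable Y)
    (hind : ProbabilityTheory.IndepFun X Y P)
    (hXlaw : Measure.map X P =
      volume.withDensity (fun x => ENNReal.ofReal (gammaScaleDensity n ρB x)))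
    (hYlaw : Measure.map Y P =
      volume.withDensity (fun y => ENNReal.ofReal (gammaScaleDensity ν ρE y))) :
    ∀ z : ℝ, 1 ≤ z → (P {ω | (1 + X ω) / (1 + Y ω) ≤ z}).toReal =
      1 - Real.exp (-(z - 1) / ρB) * ∑ a ∈ Finset.range n,
        (1 / ((a.factorial : ℝ) * ρB ^ a * Real.Gamma ν)) *
          ∑ k ∈ Finset.range (a + 1),
            (a.choose k : ℝ) * z ^ k * (z - 1) ^ (a - k) * Real.Gamma ((k : ℝ) + ν) *
              ρB ^ ((k : ℝ) + ν) * ρE ^ k * (ρB + z * ρE) ^ (-((k : ℝ) + ν)) := by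
  intro z hz
  have hz0 : (0:ℝ) < z := lt_of_lt_of_le one_pos hz
  have hΓν : (0:ℝ) < Real.Gamma ν := Real.Gamma_pos_of_pos hν
  haveI : IsProbabilityMeasure (P.map X) := Measure.isProbabilityMeasure_map hX.aemeasurable
  haveI : IsProbabilityMeasure (P.map Y) := Measure.isProbabilityMeasure_map hY.aemeasurable
  have hYpos : ∀ᵐ ω ∂P, 0 < Y ω := by
    rw [ae_iff]
    have hset : {ω | ¬ 0 < Y ω} = Y ⁻¹' (Iic 0) := by ext ω; simp [not_lt]
    rw [hset, ← Measure.map_apply hY measurableSet_Iic, hYlaw, measure_gsd_Iic_zero]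
  have hEvent : P {ω | (1 + X ω) / (1 + Y ω) ≤ z} = P {ω | X ω ≤ z - 1 + z * Y ω} := by
    apply measure_congr
    rw [Filter.eventuallyEq_set]
    filter_upwards [hYpos] with ω hω
    show (1 + X ω) / (1 + Y ω) ≤ z ↔ X ω ≤ z - 1 + z * Y ω
    rw [div_le_iff₀ (by linarith : (0:ℝ) < 1 + Y ω)]
    constructor <;> intro h <;> nlinarith
  set s : Set (ℝ × ℝ) := {p : ℝ × ℝ | p.2 ≤ z - 1 + z * p.1} with hs_def
  have hs : MeasurableSet s := measurableSet_le measurable_snd (by fun_prop)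
  have hprod := (ProbabilityTheory.indepFun_iff_map_prod_eq_prod_map_map
    hY.aemeasurable hX.aemeasurable).1 hind.symm
  have hMap : P {ω | X ω ≤ z - 1 + z * Y ω} = ((P.map Y).prod (P.map X)) s := by
    rw [← hprod, Measure.map_apply (hY.prodMk hX) hs]
    rfl
  have hProd : ((P.map Y).prod (P.map X)) s
      = ∫⁻ y, (P.map X) (Iic (z - 1 + z * y)) ∂(P.map Y) := by
    rw [Measure.prod_apply hs]
    apply lintegral_congr
    intro y
    rfl
  have hFmeas : Measurable fun y : ℝ =>
      (volume.withDensity (fun x => ENNReal.ofReal (gammaScaleDensity n ρB x)))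
        (Iic (z - 1 + z * y)) := by
    have hmono : Monotone (fun t : ℝ =>
        (volume.withDensity (fun x => ENNReal.ofReal (gammaScaleDensity n ρB x))) (Iic t)) :=
      fun a b hab => measure_mono (Iic_subset_Iic.2 hab)
    exact hmono.measurable.comp (by fun_prop)
  rw [hEvent, hMap, hProd, hXlaw, hYlaw,
    lintegral_withDensity_eq_lintegral_mul _ (measurable_gsd ν ρE) hFmeas,
    ← lintegral_add_compl _ measurableSet_Ioi (μ := volume), compl_Ioi]
  have hIic : ∫⁻ y in Iic (0:ℝ), ((fun y => ENNReal.ofReal (gammaScaleDensity ν ρE y)) *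
      fun y => (volume.withDensity fun x => ENNReal.ofReal (gammaScaleDensity (↑n) ρB x))
        (Iic (z - 1 + z * y))) y = 0 := by
    rw [setLIntegral_congr_fun (g := fun _ => 0) measurableSet_Iic
      (fun y (hy : y ≤ 0) => by
        simp only [Pi.mul_apply]
        unfold gammaScaleDensity
        rw [if_neg (not_lt.2 hy), ENNReal.ofReal_zero, zero_mul]), lintegral_zero]
  rw [hIic, add_zero]
  have harg : ∀ y : ℝ, 0 < y → 0 ≤ z - 1 + z * y := by
    intro y hy; nlinarith
  set H : ℝ → ℝ := fun y =>
    (y ^ (ν-1) * ρE ^ (-ν) * Real.exp (-y/ρE) / Real.Gamma ν) *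
      (1 - Real.exp (-(z-1+z*y)/ρB) * gammaCdfPoly n ρB (z-1+z*y)) with hH
  have hmain := main_integral n hn hν hρB hρE hz
  have hIoi : ∫⁻ y in Ioi (0:ℝ), ((fun y => ENNReal.ofReal (gammaScaleDensity ν ρE y)) *
      fun y => (volume.withDensity fun x => ENNReal.ofReal (gammaScaleDensity (↑n) ρB x))
        (Iic (z - 1 + z * y))) y
      = ∫⁻ y in Ioi (0:ℝ), ENNReal.ofReal (H y) := by
    apply setLIntegral_congr_fun measurableSet_Ioi
    intro y hy
    have hy0 : (0:ℝ) < y := hy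
    simp only [Pi.mul_apply]
    rw [cdf_gamma_map n hn hρB (harg y hy0)]
    rw [← ENNReal.ofReal_mul (by
      unfold gammaScaleDensity
      rw [if_pos hy0]
      have h1 : (0:ℝ) ≤ y ^ (ν-1) := Real.rpow_nonneg hy0.le _
      have h2 : (0:ℝ) ≤ ρE ^ (-ν) := Real.rpow_nonneg hρE.le _
      positivity)]
    rw [hH]
    congr 1
    unfold gammaScaleDensity
    rw [if_pos hy0]
  rw [hIoi, ← ofReal_integral_eq_lintegral_ofReal hmain.1
    ((ae_restrict_iff' measurableSet_Ioi).2 (ae_of_all _ (fun y hy => by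
      have hy0 : (0:ℝ) < y := hy
      simp only [Pi.zero_apply]
      have h1 : (0:ℝ) ≤ y ^ (ν-1) := Real.rpow_nonneg hy0.le _
      have h2 : (0:ℝ) ≤ ρE ^ (-ν) := Real.rpow_nonneg hρE.le _
      have h3 := Fc_nonneg n hn hρB (harg y hy0)
      have h4 : (0:ℝ) ≤ Real.exp (-y/ρE) := (Real.exp_pos _).le
      apply mul_nonneg _ h3
      positivity)))]
  rw [ENNReal.toReal_ofReal (by
    apply setIntegral_nonneg measurableSet_Ioi
    intro y hy
    have hy0 : (0:ℝ) < y := hy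
    have h1 : (0:ℝ) ≤ y ^ (ν-1) := Real.rpow_nonneg hy0.le _
    have h2 : (0:ℝ) ≤ ρE ^ (-ν) := Real.rpow_nonneg hρE.le _
    have h3 := Fc_nonneg n hn hρB (harg y hy0)
    apply mul_nonneg _ h3
    positivity)]
  exact hmain.2
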